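/- A first-order theory T is Δ-based (every T-formula is T-equivalent to a Boolean combination of formulas from Δ) if and only if, for any tuple ā of any (equivalently, some) weakly saturated model of T, the complete type tp(ā) is Δ-based (i.e., isolated by the set of formulas φ^δ ∈ tp(ā) with φ ∈ Δ, δ ∈ {0,1}). -/

import Mathlib

open FirstOrder Language Cardinal

namespace AlmostArity

/-- Boolean combinations of formulas from a set `S` of formulas. -/
inductive BoolComb {L : FirstOrder.Language.{0, 0}} {α : Type} (S : Set (L.Formula α)) :
    L.Formula α → Prop
  | base {φ : L.Formula α} : φ ∈ S → BoolComb S φ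
  | falsum : BoolComb S ⊥
  | not {φ : L.Formula α} : BoolComb S φ → BoolComb S φ.not
  | imp {φ ψ : L.Formula α} : BoolComb S φ → BoolComb S ψ → BoolComb S (φ.imp ψ)

/-- The set of formulas in `k` variables that are substitution instances of formulas with at
most `n` free variables, together with the equality formulas `xᵢ ≈ xⱼ`. -/
def nAryInstances (L : FirstOrder.Language.{0, 0}) (n k : ℕ) : Set (L.Formula (Fin k)) :=
  {χ | ∃ (j : ℕ) (_ : j ≤ n) (χ₀ : L.Formula (Fin j)) (f : Fin j → Fin k), χ = χ₀.relabel f} ∪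
    {χ | ∃ i j : Fin k, χ = Term.equal (Term.var i) (Term.var j)}

/-- The set of formulas in `k` variables obtained from the formulas `Φ` by substitutions of
free variables. -/
def substInstances {L : FirstOrder.Language.{0, 0}} {m r : ℕ}
    (Φ : Fin m → L.Formula (Fin r)) (k : ℕ) : Set (L.Formula (Fin k)) :=
  {χ | ∃ (i : Fin m) (f : Fin r → Fin k), χ = (Φ i).relabel f}

/-- A formula `φ` of a theory `T` is `n`-ary if it is `T`-equivalent to a Boolean combination of
`T`-formulas each having at most `n` free variables. -/
def IsNAryFormula {L : FirstOrder.Language.{0, 0}} (T : L.Theory) (n : ℕ) {k : ℕ}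
    (φ : L.Formula (Fin k)) : Prop :=
  ∃ ψ : L.Formula (Fin k), BoolComb (nAryInstances L n k) ψ ∧ φ ⇔[T] ψ

/-- A theory `T` is `n`-ary if every `T`-formula is `n`-ary. -/
def IsNAry {L : FirstOrder.Language.{0, 0}} (T : L.Theory) (n : ℕ) : Prop :=
  ∀ (k : ℕ) (φ : L.Formula (Fin k)), IsNAryFormula T n φ

/-- The arity `ar_T(φ)` of a formula `φ` of a theory `T`:  the least `n` such that `φ` is
`n`-ary (`⊤ = ∞` if there is no such `n`). -/
noncomputable def arFormula {L : FirstOrder.Language.{0, 0}} (T : L.Theory) {k : ℕ}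
    (φ : L.Formula (Fin k)) : ℕ∞ :=
  sInf {N : ℕ∞ | ∃ n : ℕ, N = n ∧ IsNAryFormula T n φ}

/-- The arity `ar(T)` of a theory `T`: the least `n ≥ 1` such that `T` is `n`-ary
(`⊤ = ∞` if there is no such `n`). -/
noncomputable def ar {L : FirstOrder.Language.{0, 0}} (T : L.Theory) : ℕ∞ :=
  sInf {N : ℕ∞ | ∃ n : ℕ, 1 ≤ n ∧ N = n ∧ IsNAry T n}

/-- The formulas `Φ` witness that `T` is almost `n`-ary:  every `T`-formula is `T`-equivalent
to a Boolean combination of `n`-ary formulas and of formulas obtained by substitutions of free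
variables in the formulas of `Φ`. -/
def AlmostWitness {L : FirstOrder.Language.{0, 0}} (T : L.Theory) (n : ℕ) {m r : ℕ}
    (Φ : Fin m → L.Formula (Fin r)) : Prop :=
  ∀ (k : ℕ) (φ : L.Formula (Fin k)),
    ∃ ψ : L.Formula (Fin k), BoolComb (nAryInstances L n k ∪ substInstances Φ k) ψ ∧ φ ⇔[T] ψ

/-- A theory `T` is almost `n`-ary if there are finitely many formulas `φ₁ x̄, …, φ_m x̄` such
that every `T`-formula is `T`-equivalent to a Boolean combination of `n`-ary formulas and of
formulas obtained by substitutions of free variables in `φ₁, …, φ_m`. -/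
def IsAlmostNAry {L : FirstOrder.Language.{0, 0}} (T : L.Theory) (n : ℕ) : Prop :=
  ∃ (m r : ℕ) (Φ : Fin m → L.Formula (Fin r)), AlmostWitness T n Φ

/-- `aar(T)`: the least `n ≥ 1` such that `T` is almost `n`-ary (`⊤ = ∞` if there is none). -/
noncomputable def aar {L : FirstOrder.Language.{0, 0}} (T : L.Theory) : ℕ∞ :=
  sInf {N : ℕ∞ | ∃ n : ℕ, 1 ≤ n ∧ N = n ∧ IsAlmostNAry T n}

/-- The degree `deg_aar(T)` of almost `n`-arity: the pair `(m, r)` where `m` is the minimal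
number of witnessing formulas and `r` the minimal length of their tuple of free variables
(with `(0, 0)` when no extra formulas are needed, i.e. when `T` is `n`-ary). -/
noncomputable def degAar {L : FirstOrder.Language.{0, 0}} (T : L.Theory) (n : ℕ) : ℕ × ℕ :=
  let m := sInf {m : ℕ | ∃ (r : ℕ) (Φ : Fin m → L.Formula (Fin r)), AlmostWitness T n Φ}
  (m, sInf {r : ℕ | ∃ Φ : Fin m → L.Formula (Fin r), AlmostWitness T n Φ})

/-- `T'` is an expansion of `T`: a complete theory in a larger language whose restriction to
the language of `T` is `T`. -/
def IsExpansion {L L' : FirstOrder.Language.{0, 0}} (f : L →ᴸ L') (T : L.Theory)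
    (T' : L'.Theory) : Prop :=
  T'.IsComplete ∧ ∀ φ : L.Sentence, φ ∈ T ↔ f.onSentence φ ∈ T'

/-- A theory `T` is `n`-aritizable if it has an `n`-ary expansion. -/
def IsNAritizable {L : FirstOrder.Language.{0, 0}} (T : L.Theory) (n : ℕ) : Prop :=
  ∃ (L' : FirstOrder.Language.{0, 0}) (f : L →ᴸ L') (T' : L'.Theory),
    IsExpansion f T T' ∧ IsNAry T' n

/-- A theory `T` is almost `n`-aritizable if it has an almost `n`-ary expansion. -/
def IsAlmostNAritizable {L : FirstOrder.Language.{0, 0}} (T : L.Theory) (n : ℕ) : Prop :=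
  ∃ (L' : FirstOrder.Language.{0, 0}) (f : L →ᴸ L') (T' : L'.Theory),
    IsExpansion f T T' ∧ IsAlmostNAry T' n

/-- A countable complete theory is `ω`-categorical if it has exactly one countable model up to
isomorphism. -/
def IsOmegaCategorical {L : FirstOrder.Language.{0, 0}} (T : L.Theory) : Prop :=
  L.card ≤ Cardinal.aleph0 ∧ T.IsComplete ∧ Cardinal.Categorical Cardinal.aleph0.{0} T


/-- The substitution instances in `k` variables of the formulas of `Δ`. -/
def deltaInstances {L : FirstOrder.Language.{0, 0}} (Δ : ∀ j : ℕ, Set (L.Formula (Fin j)))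
    (k : ℕ) : Set (L.Formula (Fin k)) :=
  {χ | ∃ (j : ℕ) (φ : L.Formula (Fin j)) (f : Fin j → Fin k), φ ∈ Δ j ∧ χ = φ.relabel f}

/-- A theory `T` is `Δ`-based if every `T`-formula is `T`-equivalent to a Boolean combination
of formulas from `Δ`. -/
def DeltaBasedTheory {L : FirstOrder.Language.{0, 0}} (T : L.Theory)
    (Δ : ∀ j : ℕ, Set (L.Formula (Fin j))) : Prop :=
  ∀ (k : ℕ) (φ : L.Formula (Fin k)), ∃ ψ, BoolComb (deltaInstances Δ k) ψ ∧ φ ⇔[T] ψ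

/-- `M` is a weakly saturated model of `T`: it realizes every complete type of `T`, i.e. every
type realized in some model of `T`. -/
def WeaklySaturated {L : FirstOrder.Language.{0, 0}} (T : L.Theory) (M : Type)
    [L.Structure M] : Prop :=
  ∀ (N : Theory.ModelType.{0, 0, 0} T) (k : ℕ) (b : Fin k → N), ∃ a : Fin k → M,
    ∀ φ : L.Formula (Fin k), φ.Realize a ↔ φ.Realize b

/-- The complete type `tp(ā)` is `Δ`-based: it is isolated (axiomatized modulo `T`) by the set
of formulas `φ^δ ∈ tp(ā)` with `φ ∈ Δ`, `δ ∈ {0, 1}`, i.e. any tuple in any model of `T`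
realizing the same formulas of `Δ` and the same negations realizes the whole type. -/
def DeltaBasedType {L : FirstOrder.Language.{0, 0}} (T : L.Theory)
    (Δ : ∀ j : ℕ, Set (L.Formula (Fin j))) {M : Type} [L.Structure M] {k : ℕ}
    (a : Fin k → M) : Prop :=
  ∀ (N : Theory.ModelType.{0, 0, 0} T) (b : Fin k → N),
    (∀ χ ∈ deltaInstances Δ k, (χ.Realize b ↔ χ.Realize a)) →
      ∀ φ : L.Formula (Fin k), (φ.Realize b ↔ φ.Realize a)


section Aux

variable {L : FirstOrder.Language.{0, 0}}

/-- conjunction of a list of formulas -/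
def conjL {α : Type} (l : List (L.Formula α)) : L.Formula α :=
  (l.foldr (fun (χ acc : L.Formula α) => χ.imp acc) ⊥).not

/-- disjunction of a list of formulas -/
def disjL {α : Type} (l : List (L.Formula α)) : L.Formula α :=
  l.foldr (fun (χ acc : L.Formula α) => χ.not.imp acc) ⊥

lemma realize_foldr_imp {α M : Type} [L.Structure M] (l : List (L.Formula α)) (v : α → M) :
    (l.foldr (fun (χ acc : L.Formula α) => χ.imp acc) ⊥).Realize v ↔ ¬ ∀ χ ∈ l, χ.Realize v := by
  induction l with
  | nil => simp [Formula.realize_bot]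
  | cons χ t ih =>
      simp only [List.foldr_cons, Formula.realize_imp, ih, List.mem_cons]
      constructor
      · intro h hall
        exact h (hall χ (Or.inl rfl)) (fun ψ hψ => hall ψ (Or.inr hψ))
      · intro h hχ hall
        exact h (fun ψ hψ => hψ.elim (fun e => e ▸ hχ) (hall ψ))

lemma realize_conjL {α M : Type} [L.Structure M] (l : List (L.Formula α)) (v : α → M) :
    (conjL l).Realize v ↔ ∀ χ ∈ l, χ.Realize v := by
  rw [conjL, Formula.realize_not, realize_foldr_imp, Classical.not_not]

lemma realize_disjL {α M : Type} [L.Structure M] (l : List (L.Formula α)) (v : α → M) :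
    (disjL l).Realize v ↔ ∃ χ ∈ l, χ.Realize v := by
  induction l with
  | nil => simp [disjL, Formula.realize_bot]
  | cons χ t ih =>
      rw [show disjL (χ :: t) = χ.not.imp (disjL t) from rfl, Formula.realize_imp,
        Formula.realize_not, ih]
      constructor
      · intro h
        by_cases hχ : χ.Realize v
        · exact ⟨χ, List.mem_cons_self, hχ⟩
        · obtain ⟨ψ, hm, hr⟩ := h hχ
          exact ⟨ψ, List.mem_cons_of_mem _ hm, hr⟩
      · rintro ⟨ψ, hm, hr⟩ hn
        rcases List.mem_cons.1 hm with rfl | hm'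
        · exact absurd hr hn
        · exact ⟨ψ, hm', hr⟩

lemma boolComb_foldr_imp {α : Type} {S : Set (L.Formula α)} {l : List (L.Formula α)}
    (h : ∀ χ ∈ l, BoolComb S χ) :
    BoolComb S (l.foldr (fun (χ acc : L.Formula α) => χ.imp acc) ⊥) := by
  induction l with
  | nil => exact BoolComb.falsum
  | cons χ t ih =>
      exact BoolComb.imp (h χ (List.mem_cons_self))
        (ih fun ψ hψ => h ψ (List.mem_cons_of_mem _ hψ))

lemma boolComb_conjL {α : Type} {S : Set (L.Formula α)} {l : List (L.Formula α)}
    (h : ∀ χ ∈ l, BoolComb S χ) : BoolComb S (conjL l) :=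
  BoolComb.not (boolComb_foldr_imp h)

lemma boolComb_disjL {α : Type} {S : Set (L.Formula α)} {l : List (L.Formula α)}
    (h : ∀ χ ∈ l, BoolComb S χ) : BoolComb S (disjL l) := by
  induction l with
  | nil => exact BoolComb.falsum
  | cons χ t ih =>
      exact BoolComb.imp (BoolComb.not (h χ (List.mem_cons_self)))
        (ih fun ψ hψ => h ψ (List.mem_cons_of_mem _ hψ))

/-- A theory with constants for `Fin k` together with a set of formulas-as-sentences is
satisfiable iff the formulas are simultaneously realizable in a model of `T`. -/
lemma sat_iff (T : L.Theory) {k : ℕ} (X : Set (L.Formula (Fin k))) :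
    ((L.lhomWithConstants (Fin k)).onTheory T ∪
        Formula.equivSentence '' X).IsSatisfiable ↔
      ∃ (N : Theory.ModelType.{0,0,0} T) (v : Fin k → N), ∀ χ ∈ X, χ.Realize v := by
  constructor
  · rintro ⟨M'⟩
    letI := (L.lhomWithConstants (Fin k)).reduct M'
    haveI : (L.lhomWithConstants (Fin k)).IsExpansionOn M' := LHom.isExpansionOn_reduct _ _
    haveI hm : M' ⊨ (L.lhomWithConstants (Fin k)).onTheory T :=
      M'.is_model.mono Set.subset_union_left
    haveI : (M' : Type) ⊨ T := (LHom.onTheory_model _ _).1 hm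
    refine ⟨Theory.ModelType.of T M', fun i => (L.con i : M'), fun χ hχ => ?_⟩
    have hr : (M' : Type) ⊨ Formula.equivSentence χ :=
      M'.is_model.realize_of_mem _ (Set.mem_union_right _ ⟨χ, hχ, rfl⟩)
    exact (Formula.realize_equivSentence (M' : Type) χ).1 hr
  · rintro ⟨N, v, hv⟩
    letI : (constantsOn (Fin k)).Structure N := constantsOn.structure v
    haveI : (N : Type) ⊨ (L.lhomWithConstants (Fin k)).onTheory T ∪
        Formula.equivSentence '' X := by
      refine Theory.Model.union ((LHom.onTheory_model _ _).2 inferInstance) ?_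
      rw [Theory.model_iff]
      rintro _ ⟨χ, hχ, rfl⟩
      rw [Formula.realize_equivSentence]
      exact hv χ hχ
    exact Theory.Model.isSatisfiable N

/-- Extract a finite unsatisfiable part by compactness. -/
lemma unsat_finite {L' : FirstOrder.Language.{0,0}} (T' : L'.Theory) (S' : Set L'.Sentence)
    (h : ¬ (T' ∪ S').IsSatisfiable) :
    ∃ Y : Finset L'.Sentence, ↑Y ⊆ S' ∧ ¬ (T' ∪ ↑Y).IsSatisfiable := by
  classical
  rw [Theory.isSatisfiable_iff_isFinitelySatisfiable] at h
  simp only [Theory.IsFinitelySatisfiable, not_forall] at h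
  obtain ⟨T0, hsub, hT0⟩ := h
  refine ⟨T0.filter (· ∈ S'), ?_, fun hs => hT0 (hs.mono ?_)⟩
  · intro x hx
    simp only [Finset.coe_filter, Set.mem_setOf_eq] at hx
    exact hx.2
  · intro x hx
    rcases hsub hx with h' | h'
    · exact Or.inl h'
    · exact Or.inr (by simp only [Finset.coe_filter, Set.mem_setOf_eq]; exact ⟨hx, h'⟩)

/-- The key separation lemma: if realization of `φ` only depends on the `S`-type of a tuple
across models of `T`, then `φ` is `T`-equivalent to a Boolean combination of formulas in `S`. -/
lemma separation (T : L.Theory) {k : ℕ} (S : Set (L.Formula (Fin k))) (φ : L.Formula (Fin k))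
    (hsep : ∀ (N₁ N₂ : Theory.ModelType.{0,0,0} T) (a : Fin k → N₁) (b : Fin k → N₂),
      (∀ χ ∈ S, (χ.Realize a ↔ χ.Realize b)) → (φ.Realize a → φ.Realize b)) :
    ∃ ψ, BoolComb S ψ ∧ φ ⇔[T] ψ := by
  classical
  have step1 : ∀ (N : Theory.ModelType.{0,0,0} T) (a : Fin k → N), φ.Realize a →
      ∃ ψ, BoolComb S ψ ∧ ψ.Realize a ∧ T ⊨ᵇ ψ.imp φ := by
    intro N a ha
    set Xa : Set (L.Formula (Fin k)) :=
      {χ | χ ∈ S ∧ χ.Realize a} ∪ (Formula.not '' {χ | χ ∈ S ∧ ¬χ.Realize a}) ∪ {φ.not}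
      with hXadef
    have hXa_unsat : ¬((L.lhomWithConstants (Fin k)).onTheory T ∪
        Formula.equivSentence '' Xa).IsSatisfiable := by
      rw [sat_iff]
      rintro ⟨N₂, b, hb⟩
      have hagr : ∀ χ ∈ S, (χ.Realize a ↔ χ.Realize b) := by
        intro χ hχ
        by_cases hr : χ.Realize a
        · exact iff_of_true hr (hb χ (Or.inl (Or.inl ⟨hχ, hr⟩)))
        · have h2 := hb χ.not (Or.inl (Or.inr ⟨χ, ⟨hχ, hr⟩, rfl⟩))
          rw [Formula.realize_not] at h2
          exact iff_of_false hr h2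
      have hφb := hsep N N₂ a b hagr ha
      have h3 := hb φ.not (Or.inr rfl)
      rw [Formula.realize_not] at h3
      exact h3 hφb
    obtain ⟨Y, hYsub, hYunsat⟩ := unsat_finite _ _ hXa_unsat
    set Y0 : Finset (L.Formula (Fin k)) := Y.image Formula.equivSentence.symm with hY0def
    have hY0X : ∀ χ ∈ Y0, χ ∈ Xa := by
      intro χ hχ
      obtain ⟨s, hs, rfl⟩ := Finset.mem_image.1 hχ
      obtain ⟨χ₀, hχ₀, rfl⟩ := hYsub hs
      rw [Equiv.symm_apply_apply]
      exact hχ₀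
    have hYY0 : (Y : Set (L[[Fin k]].Sentence)) ⊆
        Formula.equivSentence '' (Y0 : Set (L.Formula (Fin k))) := by
      intro s hs
      exact ⟨Formula.equivSentence.symm s,
        Finset.mem_coe.2 (Finset.mem_image_of_mem _ hs), Equiv.apply_symm_apply _ s⟩
    set l := (Y0.erase φ.not).toList with hldef
    have hmeml : ∀ χ, χ ∈ l ↔ (χ ∈ Y0 ∧ χ ≠ φ.not) := by
      intro χ
      rw [hldef, Finset.mem_toList, Finset.mem_erase, and_comm]
    refine ⟨conjL l, ?_, ?_, ?_⟩
    · apply boolComb_conjL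
      intro χ hχ
      obtain ⟨hY0, hne⟩ := (hmeml χ).1 hχ
      rcases hY0X χ hY0 with (⟨hS, _⟩ | ⟨χ₀, ⟨hS, _⟩, rfl⟩) | hφn
      · exact BoolComb.base hS
      · exact BoolComb.not (BoolComb.base hS)
      · exact absurd hφn hne
    · rw [realize_conjL]
      intro χ hχ
      obtain ⟨hY0, hne⟩ := (hmeml χ).1 hχ
      rcases hY0X χ hY0 with (⟨_, hr⟩ | ⟨χ₀, ⟨_, hr⟩, rfl⟩) | hφn
      · exact hr
      · rw [Formula.realize_not]; exact hr
      · exact absurd hφn hne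
    · rw [Theory.models_formula_iff]
      intro N₃ c
      rw [Formula.realize_imp]
      intro hc
      by_contra hnφ
      apply hYunsat
      refine Theory.IsSatisfiable.mono ?_ (Set.union_subset_union_right _ hYY0)
      refine (sat_iff T _).2 ⟨N₃, c, ?_⟩
      intro χ hχ
      by_cases hne : χ = φ.not
      · subst hne; rw [Formula.realize_not]; exact hnφ
      · exact (realize_conjL l c).1 hc χ ((hmeml χ).2 ⟨Finset.mem_coe.1 hχ, hne⟩)
  -- step 2
  set D : Set (L.Formula (Fin k)) := {ψ | BoolComb S ψ ∧ T ⊨ᵇ ψ.imp φ} with hDdef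
  have h2 : ¬((L.lhomWithConstants (Fin k)).onTheory T ∪
      Formula.equivSentence '' ({φ} ∪ Formula.not '' D)).IsSatisfiable := by
    rw [sat_iff]
    rintro ⟨N, a, ha⟩
    have hφa := ha φ (Or.inl rfl)
    obtain ⟨ψ, hb, hr, himp⟩ := step1 N a hφa
    have h3 := ha ψ.not (Or.inr ⟨ψ, ⟨hb, himp⟩, rfl⟩)
    rw [Formula.realize_not] at h3
    exact h3 hr
  obtain ⟨Y, hYsub, hYunsat⟩ := unsat_finite _ _ h2
  set Y0 : Finset (L.Formula (Fin k)) := Y.image Formula.equivSentence.symm with hY0def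
  have hY0X : ∀ χ ∈ Y0, χ ∈ ({φ} ∪ Formula.not '' D : Set (L.Formula (Fin k))) := by
    intro χ hχ
    obtain ⟨s, hs, rfl⟩ := Finset.mem_image.1 hχ
    obtain ⟨χ₀, hχ₀, rfl⟩ := hYsub hs
    rw [Equiv.symm_apply_apply]
    exact hχ₀
  have hYY0 : (Y : Set (L[[Fin k]].Sentence)) ⊆
      Formula.equivSentence '' (Y0 : Set (L.Formula (Fin k))) := by
    intro s hs
    exact ⟨Formula.equivSentence.symm s,
      Finset.mem_coe.2 (Finset.mem_image_of_mem _ hs), Equiv.apply_symm_apply _ s⟩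
  set g : L.Formula (Fin k) → L.Formula (Fin k) := fun χ =>
    if h : ∃ ψ ∈ D, χ = ψ.not then h.choose else ⊥ with hgdef
  have hg : ∀ χ, (hex : ∃ ψ ∈ D, χ = ψ.not) → g χ ∈ D ∧ χ = (g χ).not := by
    intro χ hex
    rw [hgdef]
    simp only [dif_pos hex]
    exact ⟨hex.choose_spec.1, hex.choose_spec.2⟩
  set l : List (L.Formula (Fin k)) :=
    ((Y0.toList).filter (fun χ => χ ≠ φ)).map g with hldef
  have hlD : ∀ ψ' ∈ l, ψ' ∈ D := by
    intro ψ' hψ'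
    obtain ⟨χ, hχ, rfl⟩ := List.mem_map.1 hψ'
    have hχY0 : χ ∈ Y0 := Finset.mem_toList.1 (List.mem_of_mem_filter hχ)
    have hne : χ ≠ φ := by simpa using List.of_mem_filter hχ
    rcases hY0X χ hχY0 with hc | ⟨ψ, hψD, rfl⟩
    · exact absurd hc hne
    · exact (hg ψ.not ⟨ψ, hψD, rfl⟩).1
  have hglit : ∀ χ ∈ Y0, χ ≠ φ → g χ ∈ l ∧ χ = (g χ).not := by
    intro χ hχ hne
    have hχl : χ ∈ (Y0.toList).filter (fun χ => χ ≠ φ) :=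
      List.mem_filter.2 ⟨Finset.mem_toList.2 hχ, by simpa using hne⟩
    refine ⟨List.mem_map.2 ⟨χ, hχl, rfl⟩, ?_⟩
    rcases hY0X χ hχ with hc | ⟨ψ, hψD, rfl⟩
    · exact absurd hc hne
    · exact (hg ψ.not ⟨ψ, hψD, rfl⟩).2
  refine ⟨disjL l, boolComb_disjL (fun ψ' hψ' => (hlD ψ' hψ').1), ?_⟩
  have hfwd : T ⊨ᵇ φ.imp (disjL l) := by
    rw [Theory.models_formula_iff]
    intro N c
    rw [Formula.realize_imp]
    intro hφc
    by_contra hnd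
    apply hYunsat
    refine Theory.IsSatisfiable.mono ?_ (Set.union_subset_union_right _ hYY0)
    refine (sat_iff T _).2 ⟨N, c, ?_⟩
    intro χ hχ
    by_cases hne : χ = φ
    · subst hne; exact hφc
    · obtain ⟨hmem, heq⟩ := hglit χ (Finset.mem_coe.1 hχ) hne
      rw [heq, Formula.realize_not]
      intro hr
      exact hnd ((realize_disjL l c).2 ⟨g χ, hmem, hr⟩)
  have hbwd : T ⊨ᵇ (disjL l).imp φ := by
    rw [Theory.models_formula_iff]
    intro N c
    rw [Formula.realize_imp]
    intro hd
    obtain ⟨ψ', hm, hr⟩ := (realize_disjL l c).1 hd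
    have himp := (hlD ψ' hm).2
    have h3 : (ψ'.imp φ).Realize c := himp N c default
    rw [Formula.realize_imp] at h3
    exact h3 hr
  exact Theory.imp_antisymm hfwd hbwd

/-- Realization of a Boolean combination only depends on realization of the base formulas. -/
lemma boolComb_realize_congr {α : Type} {M N : Type} [L.Structure M] [L.Structure N]
    {S : Set (L.Formula α)} {ψ : L.Formula α} (hb : BoolComb S ψ) {a : α → M} {b : α → N}
    (hagr : ∀ χ ∈ S, (χ.Realize b ↔ χ.Realize a)) : ψ.Realize b ↔ ψ.Realize a := by
  induction hb with
  | base h => exact hagr _ h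
  | falsum => simp [Formula.realize_bot]
  | not _ ih => rw [Formula.realize_not, Formula.realize_not, ih]
  | imp _ _ ih1 ih2 => rw [Formula.realize_imp, Formula.realize_imp, ih1, ih2]

end Aux

/-- A theory `T` is `Δ`-based if and only if for any tuple `ā` of any (some) weakly saturated
model of `T` the type `tp(ā)` is `Δ`-based. -/

theorem statement0 {L : FirstOrder.Language.{0, 0}} (T : L.Theory)
    (Δ : ∀ j : ℕ, Set (L.Formula (Fin j))) (M : Type) [L.Structure M]
    (hM : T.Model M) (hws : WeaklySaturated T M) :
    DeltaBasedTheory T Δ ↔ ∀ (k : ℕ) (a : Fin k → M), DeltaBasedType T Δ a := by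
  constructor
  · -- T is Δ-based implies every type is Δ-based
    intro h k a N b hagr φ
    obtain ⟨ψ, hbc, heq⟩ := h k φ
    haveI : M ⊨ T := hM
    haveI : Nonempty M := by
      obtain ⟨c, hc⟩ := hws N 0 default
      have h2 : Formula.Realize (L := L) (((⊤ : L.BoundedFormula (Fin 0) 1).ex)) (default : Fin 0 → N) := by
        simp only [Formula.Realize, BoundedFormula.realize_ex, BoundedFormula.realize_top]
        exact ⟨Classical.arbitrary N, trivial⟩
      have h3 := (hc ((⊤ : L.BoundedFormula (Fin 0) 1).ex)).2 h2
      simp only [Formula.Realize, BoundedFormula.realize_ex, BoundedFormula.realize_top,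
        exists_true_iff_nonempty] at h3
      exact h3
    rw [heq.realize_iff (M := N), heq.realize_iff (M := M)]
    exact boolComb_realize_congr hbc hagr
  · -- conversely
    intro h k φ
    apply separation T (deltaInstances Δ k) φ
    intro N₁ N₂ a b hagr hφa
    obtain ⟨a', ha'⟩ := hws N₁ k a
    have hq := h k a' N₂ b (fun χ hχ => ((hagr χ hχ).symm.trans (ha' χ).symm))
    exact (hq φ).2 ((ha' φ).2 hφa)


end AlmostArity
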